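/- For every t ∈ [0,1], the set of levels q ∈ {1,…,N} for which t does NOT belong to any of the closed sub-intervals I_q^j := [jh + qδ, (j+1)h + (q−1)δ] (j ranging over the integers) has cardinality at most 1. Equivalently, every t ∈ [0,1] is covered by the closed sub-intervals of at least N−1 of the N shifted coverings. -/
import Mathlib


/-- each t ∈ [0,1] misses the closed sub-intervals of at most one of the
N shifted coverings. -/
theorem covering_miss_at_most_one
    (N : ℕ) (hN : 2 ≤ N) (δ : ℝ) (hδ : 0 < δ)
    (h : ℝ) (hh : h = (N : ℝ) * δ)
    (J : ℕ) (hJ : 0 < J) (hJh : (J : ℝ) * h = 1) :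
    ∀ t ∈ Set.Icc (0 : ℝ) 1,
      Set.ncard {q : ℕ | 1 ≤ q ∧ q ≤ N ∧
        ¬ ∃ j : ℤ, t ∈ Set.Icc ((j : ℝ) * h + (q : ℝ) * δ)
          (((j : ℝ) + 1) * h + ((q : ℝ) - 1) * δ)} ≤ 1 := by
  intro t ht
  have hh0 : 0 < h := by
    rw [hh]; positivity
  have hδh : δ < h := by
    rw [hh]
    have h2N : (2:ℝ) ≤ N := by exact_mod_cast hN
    nlinarith [mul_le_mul_of_nonneg_right h2N hδ.le]
  -- Key: missing level q means t is strictly inside a gap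
  have key : ∀ q : ℕ, 1 ≤ q → q ≤ N →
      (¬ ∃ j : ℤ, t ∈ Set.Icc ((j : ℝ) * h + (q : ℝ) * δ)
          (((j : ℝ) + 1) * h + ((q : ℝ) - 1) * δ)) →
      ∃ j : ℤ, (j : ℝ) * h + ((q : ℝ) - 1) * δ < t ∧ t < (j : ℝ) * h + (q : ℝ) * δ := by
    intro q hq1 hqN hmiss
    set j : ℤ := ⌊(t - ((q : ℝ) - 1) * δ) / h⌋ with hjdef
    have h1 : (j : ℝ) ≤ (t - ((q : ℝ) - 1) * δ) / h := Int.floor_le _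
    have h2 : (t - ((q : ℝ) - 1) * δ) / h < (j : ℝ) + 1 := Int.lt_floor_add_one _
    have hA : (j : ℝ) * h + ((q : ℝ) - 1) * δ ≤ t := by
      have := (le_div_iff₀ hh0).mp h1
      linarith
    have hB : t < ((j : ℝ) + 1) * h + ((q : ℝ) - 1) * δ := by
      have := (div_lt_iff₀ hh0).mp h2
      linarith
    have hlt : t < (j : ℝ) * h + (q : ℝ) * δ := by
      by_contra hge
      push_neg at hge
      exact hmiss ⟨j, hge, hB.le⟩
    have hgt : (j : ℝ) * h + ((q : ℝ) - 1) * δ < t := by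
      rcases hA.lt_or_eq with h' | h'
      · exact h'
      · exfalso
        apply hmiss
        refine ⟨j - 1, ?_, ?_⟩ <;> push_cast <;> nlinarith
    exact ⟨j, hgt, hlt⟩
  have hfin : {q : ℕ | 1 ≤ q ∧ q ≤ N ∧
        ¬ ∃ j : ℤ, t ∈ Set.Icc ((j : ℝ) * h + (q : ℝ) * δ)
          (((j : ℝ) + 1) * h + ((q : ℝ) - 1) * δ)}.Finite := by
    apply Set.Finite.subset (Set.finite_Icc 1 N)
    intro q hq
    exact ⟨hq.1, hq.2.1⟩
  rw [Set.ncard_le_one hfin]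
  · intro q1 hq1 q2 hq2
    obtain ⟨ha1, hb1, hm1⟩ := hq1
    obtain ⟨ha2, hb2, hm2⟩ := hq2
    obtain ⟨j1, hg1, hl1⟩ := key q1 ha1 hb1 hm1
    obtain ⟨j2, hg2, hl2⟩ := key q2 ha2 hb2 hm2
    subst hh
    have c1 : ((j1 * N + q1 : ℤ) : ℝ) < ((j2 * N + q2 : ℤ) : ℝ) + 1 := by
      push_cast
      nlinarith
    have c2 : ((j2 * N + q2 : ℤ) : ℝ) < ((j1 * N + q1 : ℤ) : ℝ) + 1 := by
      push_cast
      nlinarith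
    have d1 : (j1 * N + q1 : ℤ) < j2 * N + q2 + 1 := by exact_mod_cast c1
    have d2 : (j2 * N + q2 : ℤ) < j1 * N + q1 + 1 := by exact_mod_cast c2
    have hNq1 : (q1 : ℤ) ≤ N := by exact_mod_cast hb1
    have hNq2 : (q2 : ℤ) ≤ N := by exact_mod_cast hb2
    have hq1' : (1 : ℤ) ≤ q1 := by exact_mod_cast ha1
    have hq2' : (1 : ℤ) ≤ q2 := by exact_mod_cast ha2
    have heq : j1 * N + q1 = j2 * N + q2 := by omega
    have hN2 : (2 : ℤ) ≤ N := by exact_mod_cast hN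
    have hjj : j1 = j2 := by
      by_contra hne
      rcases lt_or_gt_of_ne hne with hlt' | hlt'
      · have h12 : j1 + 1 ≤ j2 := hlt'
        have := mul_le_mul_of_nonneg_right h12 (by linarith : (0:ℤ) ≤ N)
        linarith
      · have h12 : j2 + 1 ≤ j1 := hlt'
        have := mul_le_mul_of_nonneg_right h12 (by linarith : (0:ℤ) ≤ N)
        linarith
    have : (q1 : ℤ) = q2 := by
      rw [hjj] at heq
      linarith
    exact_mod_cast this
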